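/- arXiv:1401.0157 — 4 statements merged into one kernel-verified Lean document; each statement's English description precedes it below -/
import Mathlib

section
/- Let A and B be finite nonempty sets, let T_A and T_B be sets of transformations of A and of B whose generated submonoids (under composition, including the identity) are aperiodic, and fix a0 ∈ A. Then the submonoid of transformations of the disjoint union C = A ⊔ B generated by the semiconstant-sum generating set T_C determined by T_A, T_B and a0 is also aperiodic. -/
/-- The unitary transformation `(p→q)`: sends `p` to `q` and fixes every other element. -/
def unitaryT {Q : Type*} [DecidableEq Q] (p q : Q) : Function.End Q :=
  fun r => if r = p then q else r

/-- The semiconstant-sum generating set on `C = A ⊕ B` determined by `T_A`, `T_B`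
and `a0 ∈ A`: the transformations of `A` and of `B` extended by the identity, all
unitary transformations from `A` to `B`, and the constant transformation to `a0`. -/
def scGens {A B : Type*} [DecidableEq A] [DecidableEq B]
    (TA : Set (Function.End A)) (TB : Set (Function.End B)) (a0 : A) :
    Set (Function.End (A ⊕ B)) :=
  {f | ∃ t ∈ TA, f = Sum.map (t : A → A) id} ∪
  {f | ∃ t ∈ TB, f = Sum.map id (t : B → B)} ∪
  {f | ∃ (a : A) (b : B), f = unitaryT (Sum.inl a) (Sum.inr b)} ∪
  {fun _ => Sum.inl a0}

/-- eventual stability of powers -/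
lemma powStab14 {M : Type*} [Monoid M] {t : M} {k : ℕ} (h : t ^ (k + 1) = t ^ k) :
    ∀ n, k ≤ n → t ^ n = t ^ k := by
  intro n hn
  obtain ⟨m, rfl⟩ := Nat.exists_eq_add_of_le hn
  induction m with
  | zero => simp
  | succ m ih =>
    have : k + (m + 1) = (k + m) + 1 := by omega
    rw [this, pow_succ, ih (by omega), ← pow_succ, h]

/-- structural invariant -/
def Good14 {A B : Type*} (TA : Set (Function.End A)) (TB : Set (Function.End B))
    (s : Function.End (A ⊕ B)) : Prop :=
  (∃ c, s = fun _ => c) ∨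
  (∃ t ∈ Submonoid.closure TA, ∃ u ∈ Submonoid.closure TB,
    (∀ b, s (Sum.inr b) = Sum.inr (u b)) ∧
    (∀ a a', s (Sum.inl a) = Sum.inl a' → a' = t a))

lemma good_of_mem14 {A B : Type*} [DecidableEq A] [DecidableEq B]
    (TA : Set (Function.End A)) (TB : Set (Function.End B)) (a0 : A)
    {s : Function.End (A ⊕ B)} (hs : s ∈ Submonoid.closure (scGens TA TB a0)) :
    Good14 TA TB s := by
  induction hs using Submonoid.closure_induction with
  | mem f hf =>
    rcases hf with ((⟨t, ht, rfl⟩ | ⟨u, hu, rfl⟩) | ⟨a, b, rfl⟩) | hc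
    · exact Or.inr ⟨t, Submonoid.subset_closure ht, 1, Submonoid.one_mem _,
        fun b => rfl, fun a a' h => by exact (Sum.inl.inj h).symm⟩
    · exact Or.inr ⟨1, Submonoid.one_mem _, u, Submonoid.subset_closure hu,
        fun b => rfl, fun a a' h => by exact (Sum.inl.inj h).symm⟩
    · refine Or.inr ⟨1, Submonoid.one_mem _, 1, Submonoid.one_mem _,
        fun b' => by simp [unitaryT, Function.End.one_def], fun a' a'' h => ?_⟩
      by_cases hb : a' = a
      · simp [unitaryT, hb] at h
      · simp only [unitaryT] at h
        rw [if_neg (by simp [hb])] at h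
        exact (Sum.inl.inj h).symm
    · change f = fun _ => Sum.inl a0 at hc
      exact Or.inl ⟨Sum.inl a0, hc⟩
  | one =>
    exact Or.inr ⟨1, Submonoid.one_mem _, 1, Submonoid.one_mem _,
      fun b => rfl, fun a a' h => by simpa [Function.End.one_def] using h.symm⟩
  | mul s1 s2 _ _ h1 h2 =>
    rcases h1 with ⟨c, rfl⟩ | ⟨t1, ht1, u1, hu1, hB1, hA1⟩
    · exact Or.inl ⟨c, rfl⟩
    rcases h2 with ⟨c, rfl⟩ | ⟨t2, ht2, u2, hu2, hB2, hA2⟩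
    · exact Or.inl ⟨s1 c, rfl⟩
    refine Or.inr ⟨t1 * t2, Submonoid.mul_mem _ ht1 ht2, u1 * u2, Submonoid.mul_mem _ hu1 hu2,
      fun b => ?_, fun a a' h => ?_⟩
    · show s1 (s2 (Sum.inr b)) = _
      rw [hB2, hB1]; rfl
    · replace h : s1 (s2 (Sum.inl a)) = Sum.inl a' := h
      rcases h2 : s2 (Sum.inl a) with a2 | b2
      · rw [h2] at h
        have := hA1 a2 a' h
        rw [this, hA2 a a2 h2]; rfl
      · rw [h2, hB1] at h
        exact absurd h (by simp)

/-- If the submonoids generated by `T_A` and `T_B` are aperiodic, then the submonoid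
of transformations of `A ⊕ B` generated by the semiconstant-sum generating set is
also aperiodic. -/
theorem statement14 {A B : Type*} [Finite A] [Finite B] [DecidableEq A] [DecidableEq B]
    [Nonempty A] [Nonempty B]
    (TA : Set (Function.End A)) (TB : Set (Function.End B)) (a0 : A)
    (hA : ∀ s ∈ Submonoid.closure TA, ∃ k : ℕ, 1 ≤ k ∧ s ^ (k + 1) = s ^ k)
    (hB : ∀ s ∈ Submonoid.closure TB, ∃ k : ℕ, 1 ≤ k ∧ s ^ (k + 1) = s ^ k) :
    ∀ s ∈ Submonoid.closure (scGens TA TB a0), ∃ k : ℕ, 1 ≤ k ∧ s ^ (k + 1) = s ^ k := by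
  intro s hs
  rcases good_of_mem14 TA TB a0 hs with ⟨c, hc⟩ | ⟨t, ht, u, hu, hBp, hAp⟩
  · refine ⟨1, le_refl 1, ?_⟩
    rw [pow_one, pow_two]
    funext x
    show s (s x) = s x
    simp [hc]
  · obtain ⟨kA, _, hkA⟩ := hA t ht
    obtain ⟨kB, _, hkB⟩ := hB u hu
    have hu' : ∀ n, kB ≤ n → u ^ n = u ^ kB := powStab14 hkB
    have ht' : ∀ n, kA ≤ n → t ^ n = t ^ kA := powStab14 hkA
    -- B orbit
    have L1 : ∀ n b, (s ^ n) (Sum.inr b) = Sum.inr ((u ^ n) b) := by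
      intro n
      induction n with
      | zero => intro b; rfl
      | succ n ih =>
        intro b
        rw [pow_succ' s, pow_succ' u]
        show s ((s ^ n) (Sum.inr b)) = _
        rw [ih, hBp]; rfl
    -- A orbit while in A
    have L2 : ∀ n a a', (s ^ n) (Sum.inl a) = Sum.inl a' → a' = (t ^ n) a := by
      intro n
      induction n with
      | zero => intro a a' h; simpa [Function.End.one_def] using h.symm
      | succ n ih =>
        intro a a' h
        rw [pow_succ' s] at h
        replace h : s ((s ^ n) (Sum.inl a)) = Sum.inl a' := h
        rcases h2 : (s ^ n) (Sum.inl a) with a2 | b2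
        · rw [h2] at h
          rw [hAp a2 a' h, ih a a2 h2, pow_succ' t]; rfl
        · rw [h2, hBp] at h
          exact absurd h (by simp)
    refine ⟨kA + kB + 1, by omega, ?_⟩
    funext x
    rcases x with a | b
    · rcases h' : (s ^ (kA + 1)) (Sum.inl a) with a' | b
      · -- stays in A : s^kA (inl a) is a fixed point of s
        rcases h'' : (s ^ kA) (Sum.inl a) with a'' | b''
        · have e1 : a' = (t ^ (kA + 1)) a := L2 _ _ _ h'
          have e2 : a'' = (t ^ kA) a := L2 _ _ _ h''
          have e3 : a' = a'' := by rw [e1, e2, ht' (kA + 1) (by omega)]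
          have fix : s ((s ^ kA) (Sum.inl a)) = (s ^ kA) (Sum.inl a) := by
            rw [h'']
            have : s ((s ^ kA) (Sum.inl a)) = (s ^ (kA + 1)) (Sum.inl a) := by
              rw [pow_succ' s]; rfl
            rw [h''] at this
            rw [this, h', e3]
          have stay : ∀ m, (s ^ (kA + m)) (Sum.inl a) = (s ^ kA) (Sum.inl a) := by
            intro m
            induction m with
            | zero => rfl
            | succ m ih =>
              have : kA + (m + 1) = (kA + m) + 1 := by omega
              rw [this, pow_succ' s]
              show s ((s ^ (kA + m)) (Sum.inl a)) = _
              rw [ih, fix]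
          have e4 : kA + kB + 1 + 1 = kA + (kB + 2) := by omega
          have e5 : kA + kB + 1 = kA + (kB + 1) := by omega
          rw [e4, e5, stay, stay]
        · rw [pow_succ' s] at h'
          replace h' : s ((s ^ kA) (Sum.inl a)) = Sum.inl a' := h'
          rw [h'', hBp] at h'
          exact absurd h' (by simp)
      · -- exits to B by step kA+1
        have split : ∀ m, (s ^ (m + (kA + 1))) (Sum.inl a) = Sum.inr ((u ^ m) b) := by
          intro m
          rw [pow_add]
          show (s ^ m) ((s ^ (kA + 1)) (Sum.inl a)) = _
          rw [h', L1]
        have e4 : kA + kB + 1 + 1 = (kB + 1) + (kA + 1) := by omega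
        have e5 : kA + kB + 1 = kB + (kA + 1) := by omega
        rw [e4, e5, split, split, hu' (kB + 1) (by omega)]
    · rw [L1, L1, hu' (kA + kB + 1 + 1) (by omega), hu' (kA + kB + 1) (by omega)]
end

section
/- Let D = (Q, Σ, δ, q0, F) be a deterministic finite automaton with finite state set Q of cardinality n and finite alphabet Σ, and suppose the transition monoid of D (the submonoid of self-maps of Q generated by the maps q ↦ δ(q, a) for a ∈ Σ) is aperiodic. Let L ⊆ Σ* be the language accepted by D, and let L^R = {w^R : w ∈ L} be its reversal, where w^R denotes the word w spelled backwards. Then the set of left quotients {w⁻¹L^R : w ∈ Σ*} has cardinality at most 2^n − 1. -/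
private lemma foldl_mem_closure16 {Q σ : Type*} (δ : Q → σ → Q) (u : List σ) :
    (fun q => u.foldl δ q : Function.End Q) ∈
      Submonoid.closure {f : Function.End Q | ∃ a : σ, f = fun q => δ q a} := by
  induction u with
  | nil =>
      have h1 : (fun q => List.foldl δ q [] : Function.End Q) = (1 : Function.End Q) := rfl
      rw [h1]
      exact Submonoid.one_mem (M := Function.End Q) _
  | cons a u ih =>
      have hgen : (fun q => δ q a) ∈ {f : Function.End Q | ∃ a : σ, f = fun q => δ q a} :=
        ⟨a, rfl⟩
      have h := Submonoid.mul_mem (M := Function.End Q) _ ih (Submonoid.subset_closure (M := Function.End Q) hgen)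
      exact h

private lemma pow_parity16 {Q : Type*} (F : Set Q) (f : Function.End Q)
    (hf : ∀ q, f q ∈ F ↔ q ∉ F) :
    ∀ (k : ℕ) (q : Q), (f ^ k) q ∈ F ↔ (q ∈ F ↔ Even k) := by
  intro k
  induction k with
  | zero =>
      intro q
      have h0 : (f ^ 0) q = q := rfl
      rw [h0]
      simp
  | succ k ih =>
      intro q
      have h1 : (f ^ (k + 1)) q = f ((f ^ k) q) := by
        rw [pow_succ']; rfl
      rw [h1, hf, ih q, Nat.even_add_one]
      tauto

/-- If a DFA `D = (Q, Σ, δ, q0, F)` with `n` states has an aperiodic transition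
monoid, then the language `L^R` (the reversal of the language `L` accepted by `D`)
has at most `2^n − 1` left quotients. -/
theorem statement16 {Q σ : Type*} [Finite Q] [Finite σ]
    (δ : Q → σ → Q) (q0 : Q) (F : Set Q) (n : ℕ) (hn : Nat.card Q = n)
    (hap : ∀ s ∈ Submonoid.closure {f : Function.End Q | ∃ a : σ, f = fun q => δ q a},
      ∃ k : ℕ, 1 ≤ k ∧ s ^ (k + 1) = s ^ k)
    (L LR : Set (List σ))
    (hL : L = {w : List σ | w.foldl δ q0 ∈ F})
    (hLR : LR = {w : List σ | w.reverse ∈ L}) :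
    {S : Set (List σ) | ∃ w : List σ, S = {v : List σ | w ++ v ∈ LR}}.Finite ∧
    {S : Set (List σ) | ∃ w : List σ, S = {v : List σ | w ++ v ∈ LR}}.ncard ≤ 2 ^ n - 1 := by
  classical
  subst hL hLR hn
  set Φ : Set Q → Set (List σ) := fun T => {v : List σ | v.reverse.foldl δ q0 ∈ T} with hΦ
  set Tset : Set (Set Q) := Set.range (fun u : List σ => {q : Q | u.foldl δ q ∈ F})
    with hTset
  -- the quotient set is contained in the image of Tset under Φ
  have hsub : {S : Set (List σ) |
      ∃ w : List σ, S = {v : List σ | w ++ v ∈ {w | w.reverse ∈ {w | w.foldl δ q0 ∈ F}}}}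
      ⊆ Φ '' Tset := by
    rintro S ⟨w, rfl⟩
    refine ⟨{q : Q | w.reverse.foldl δ q ∈ F}, ⟨w.reverse, rfl⟩, ?_⟩
    ext v
    simp [Φ, List.foldl_append]
  -- F's complement is not in Tset
  have hFc : Fᶜ ∉ Tset := by
    rintro ⟨u, hu⟩
    set f : Function.End Q := (fun q => u.foldl δ q) with hfdef
    have hu' : {q : Q | List.foldl δ q u ∈ F} = Fᶜ := hu
    have hf : ∀ q, f q ∈ F ↔ q ∉ F := by
      intro q
      have h := Set.ext_iff.mp hu' q
      simpa [hfdef] using h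
    obtain ⟨k, _, hk⟩ := hap f (foldl_mem_closure16 δ u)
    have h1 := pow_parity16 F f hf k q0
    have h2 := pow_parity16 F f hf (k + 1) q0
    rw [hk, h1, Nat.even_add_one] at h2
    tauto
  have hTfin : Tset.Finite := Set.toFinite _
  -- cardinality of Tset
  have hcard : Tset.ncard ≤ 2 ^ Nat.card Q - 1 := by
    have hsub2 : Tset ⊆ (Set.univ : Set (Set Q)) \ {Fᶜ} := by
      intro T hT
      refine ⟨Set.mem_univ _, ?_⟩
      simp only [Set.mem_singleton_iff]
      rintro rfl
      exact hFc hT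
    have h1 : Tset.ncard ≤ ((Set.univ : Set (Set Q)) \ {Fᶜ}).ncard :=
      Set.ncard_le_ncard hsub2 (Set.toFinite _)
    have h2 : ((Set.univ : Set (Set Q)) \ {Fᶜ}).ncard
        = (Set.univ : Set (Set Q)).ncard - ({Fᶜ} : Set (Set Q)).ncard :=
      Set.ncard_diff (by simp) (Set.toFinite _)
    have hFQ : Fintype Q := Fintype.ofFinite Q
    have h3 : (Set.univ : Set (Set Q)).ncard = 2 ^ Nat.card Q := by
      rw [Set.ncard_univ]
      simp [Nat.card_eq_fintype_card, Fintype.card_set]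
    have h4 : ({Fᶜ} : Set (Set Q)).ncard = 1 := Set.ncard_singleton _
    omega
  have hfin : (Φ '' Tset).Finite := hTfin.image Φ
  refine ⟨hfin.subset hsub, ?_⟩
  calc {S : Set (List σ) | ∃ w : List σ,
        S = {v : List σ | w ++ v ∈ {w | w.reverse ∈ {w | w.foldl δ q0 ∈ F}}}}.ncard
      ≤ (Φ '' Tset).ncard := Set.ncard_le_ncard hsub hfin
    _ ≤ Tset.ncard := Set.ncard_image_le hTfin
    _ ≤ 2 ^ Nat.card Q - 1 := hcard
end

section
/- Let Σ be a finite alphabet and let K, L ⊆ Σ* be languages each accepted by some deterministic finite automaton with finitely many states whose transition monoid is aperiodic. Suppose the quotient complexity of K is m with m ≥ 2, and the quotient complexity of L is 2. Then the quotient complexity of the concatenation KL = {uv : u ∈ K, v ∈ L} is at most 3m − 2. -/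
/-- The set of left quotients of a language `M ⊆ Σ*`. -/
def LeftQuotients {σ : Type*} (M : Set (List σ)) : Set (Set (List σ)) :=
  {S | ∃ w : List σ, S = {v : List σ | w ++ v ∈ M}}

/-- `K` is accepted by a DFA with finitely many states whose transition monoid is
aperiodic (i.e., `K` is star-free, by Schützenberger's theorem). -/
def AcceptedByAperiodicDFA {σ : Type*} (K : Set (List σ)) : Prop :=
  ∃ (Q : Type) (_ : Finite Q) (δ : Q → σ → Q) (q0 : Q) (F : Set Q),
    (∀ s ∈ Submonoid.closure {f : Function.End Q | ∃ a : σ, f = fun q => δ q a},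
      ∃ k : ℕ, 1 ≤ k ∧ s ^ (k + 1) = s ^ k) ∧
    K = {w : List σ | w.foldl δ q0 ∈ F}

namespace Statement17Aux

variable {σ : Type*}

/-- Left quotient as a function. -/
def lq (w : List σ) (M : Set (List σ)) : Set (List σ) := {v | w ++ v ∈ M}

lemma lq_nil (M : Set (List σ)) : lq [] M = M := by ext v; simp [lq]

lemma lq_append (w u : List σ) (M : Set (List σ)) :
    lq (w ++ u) M = lq u (lq w M) := by
  ext v; simp [lq, List.append_assoc]

lemma lq_mem (w : List σ) (M : Set (List σ)) : lq w M ∈ LeftQuotients M := ⟨w, rfl⟩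

lemma nil_mem_lq {M : Set (List σ)} {v : List σ} : [] ∈ lq v M ↔ v ∈ M := by
  simp [lq]

/-- Aperiodicity implies the action of a word on quotients is never the swap. -/
lemma no_swap {L L' : Set (List σ)} (hL : AcceptedByAperiodicDFA L)
    (hne : L ≠ L') (u : List σ) (h1 : lq u L = L') (h2 : lq u L' = L) : False := by
  obtain ⟨Q, _, δ, q0, F, hap, hdef⟩ := hL
  set g : ℕ → List σ := fun n => (List.replicate n u).flatten with hg
  have hg0 : g 0 = [] := rfl
  have hgs : ∀ n, g (n + 1) = u ++ g n := by
    intro n; simp [hg, List.replicate_succ]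
  have recA : ∀ n, lq (g (n + 1)) L = lq (g n) L' := by
    intro n; rw [hgs, lq_append, h1]
  have recB : ∀ n, lq (g (n + 1)) L' = lq (g n) L := by
    intro n; rw [hgs, lq_append, h2]
  have inv : ∀ n, (lq (g n) L = L ∧ lq (g n) L' = L') ∨
      (lq (g n) L = L' ∧ lq (g n) L' = L) := by
    intro n; induction n with
    | zero => exact Or.inl ⟨lq_nil L, lq_nil L'⟩
    | succ n ih =>
      rcases ih with ⟨hA, hB⟩ | ⟨hA, hB⟩
      · exact Or.inr ⟨by rw [recA n, hB], by rw [recB n, hA]⟩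
      · exact Or.inl ⟨by rw [recA n, hB], by rw [recB n, hA]⟩
  set s : Function.End Q := fun st => u.foldl δ st with hs
  let FF : List σ → Function.End Q := fun l st => l.foldl δ st
  have hcl : ∀ l : List σ, FF l ∈
      Submonoid.closure {f : Function.End Q | ∃ a : σ, f = fun q => δ q a} := by
    intro l; induction l with
    | nil =>
      have heq : FF [] = (1 : Function.End Q) := rfl
      rw [heq]; exact Submonoid.one_mem _
    | cons a l ih =>
      have heq : FF (a :: l) = FF l * FF [a] := rfl
      rw [heq]
      refine Submonoid.mul_mem _ ih (Submonoid.subset_closure ⟨a, ?_⟩)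
      funext st; rfl
  have hsFF : s = FF u := rfl
  obtain ⟨k, hk1, hk⟩ := hap s (hsFF ▸ hcl u)
  have keyst : ∀ n (st : Q), (s ^ n) st = (g n).foldl δ st := by
    intro n; induction n with
    | zero => intro st; rw [pow_zero, hg0]; rfl
    | succ n ih =>
      intro st
      rw [pow_succ]
      have h1 : (s ^ n * s) st = (s ^ n) (s st) := rfl
      rw [h1, ih, hgs]
      have h2 : s st = u.foldl δ st := rfl
      rw [h2, List.foldl_append]
  have hstate : (g (k + 1)).foldl δ q0 = (g k).foldl δ q0 := by
    rw [← keyst, ← keyst, hk]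
  have hAq : ∀ n, lq (g n) L = {v : List σ | v.foldl δ ((g n).foldl δ q0) ∈ F} := by
    intro n; ext v; simp [lq, hdef, List.foldl_append]
  have hEq : lq (g (k + 1)) L = lq (g k) L := by rw [hAq, hAq, hstate]
  rcases inv k with ⟨hA, hB⟩ | ⟨hA, hB⟩
  · exact hne (by rw [← hA, ← hEq, recA k, hB])
  · exact hne (by rw [← hB, ← recA k, hEq, hA])

end Statement17Aux

open Statement17Aux in
/-- If `K` and `L` are star-free languages with quotient complexities `m ≥ 2` and `2`
respectively, then the quotient complexity of the concatenation `KL` is at most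
`3m − 2`. -/
theorem statement17 {σ : Type*} [Finite σ] (K L : Set (List σ)) (m : ℕ) (hm : 2 ≤ m)
    (hK : AcceptedByAperiodicDFA K) (hL : AcceptedByAperiodicDFA L)
    (hKm : (LeftQuotients K).ncard = m) (hL2 : (LeftQuotients L).ncard = 2) :
    (LeftQuotients (Set.image2 (· ++ ·) K L)).Finite ∧
    (LeftQuotients (Set.image2 (· ++ ·) K L)).ncard ≤ 3 * m - 2 := by
  classical
  set C := Set.image2 (· ++ ·) K L with hC
  -- the two quotients of L
  obtain ⟨a, b, hab, hset⟩ := Set.ncard_eq_two.mp hL2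
  have hLmem : L ∈ LeftQuotients L := ⟨[], by ext v; simp⟩
  have hexL' : ∃ L', L ≠ L' ∧ LeftQuotients L = {L, L'} := by
    rw [hset] at hLmem
    simp only [Set.mem_insert_iff, Set.mem_singleton_iff] at hLmem
    rcases hLmem with h | h
    · subst h; exact ⟨b, hab, hset⟩
    · subst h
      refine ⟨a, Ne.symm hab, ?_⟩
      rw [hset]; exact Set.pair_comm a L
  obtain ⟨L', hne, hQL⟩ := hexL'
  have hqLmem : ∀ u : List σ, lq u L = L ∨ lq u L = L' := by
    intro u
    have h := lq_mem u L
    rw [hQL] at h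
    exact h
  have hqL'mem : ∀ u : List σ, lq u L' = L ∨ lq u L' = L' := by
    have hL'q : L' ∈ LeftQuotients L := by rw [hQL]; exact Or.inr rfl
    obtain ⟨t, ht⟩ := hL'q
    intro u
    have ht' : L' = lq t L := ht
    have h := hqLmem (t ++ u)
    rw [lq_append, ← ht'] at h
    exact h
  have noswap : ∀ u : List σ, lq u L = L' → lq u L' = L → False :=
    fun u h1 h2 => no_swap hL hne u h1 h2
  -- quotient formula for the concatenation
  have formula : ∀ w v : List σ, v ∈ lq w C ↔
      ((∃ c ∈ lq w K, ∃ z ∈ L, c ++ z = v) ∨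
        (∃ p s, w = p ++ s ∧ p ∈ K ∧ v ∈ lq s L)) := by
    intro w v
    constructor
    · intro h
      obtain ⟨u, hu, z, hz, huz⟩ := h
      rcases List.append_eq_append_iff.mp huz with ⟨s', hws, hzs⟩ | ⟨c, huc, hvc⟩
      · refine Or.inr ⟨u, s', hws, hu, ?_⟩
        show s' ++ v ∈ L
        rw [← hzs]; exact hz
      · refine Or.inl ⟨c, ?_, z, hz, hvc.symm⟩
        show w ++ c ∈ K
        rw [← huc]; exact hu
    · rintro (⟨c, hc, z, hz, rfl⟩ | ⟨p, s, rfl, hp, hv⟩)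
      · exact ⟨w ++ c, hc, z, hz, by simp [List.append_assoc]⟩
      · exact ⟨p, hp, s ++ v, hv, by simp [List.append_assoc]⟩
  -- finiteness of quotients of K, and existence of an "accepting" quotient
  have hQKfin : (LeftQuotients K).Finite := by
    by_contra h
    have := Set.Infinite.ncard h
    omega
  have hKne : ∃ w₀, w₀ ∈ K := by
    by_contra h
    push_neg at h
    have hQK1 : LeftQuotients K = {(∅ : Set (List σ))} := by
      apply Set.eq_singleton_iff_unique_mem.mpr
      constructor
      · exact ⟨[], by ext v; simp [h]⟩
      · rintro S ⟨w, rfl⟩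
        ext v; simp [h]
    rw [hQK1, Set.ncard_singleton] at hKm
    omega
  obtain ⟨w₀, hw₀⟩ := hKne
  -- value of lq w C when no prefix of w lies in K
  have val_noP : ∀ w : List σ, (¬ ∃ p s, w = p ++ s ∧ p ∈ K) →
      lq w C = Set.image2 (· ++ ·) (lq w K) L := by
    intro w hP
    ext v
    rw [Set.mem_image2]
    constructor
    · intro hv
      rcases (formula w v).mp hv with ⟨c, hc, z, hz, hczv⟩ | ⟨p, s, hw, hp, _⟩
      · exact ⟨c, hc, z, hz, hczv⟩
      · exact absurd ⟨p, s, hw, hp⟩ hP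
    · rintro ⟨c, hc, z, hz, rfl⟩
      exact (formula w _).mpr (Or.inl ⟨c, hc, z, hz, rfl⟩)
  -- Exactly one of L, L' contains the empty word.
  by_cases hεL : ([] : List σ) ∈ L <;> by_cases hεL' : ([] : List σ) ∈ L'
  · -- both contain ε : impossible
    exfalso
    have hLuniv : ∀ v, v ∈ L := by
      intro v
      have h : [] ∈ lq v L := by
        rcases hqLmem v with h | h <;> rw [h] <;> assumption
      exact nil_mem_lq.mp h
    have hL'univ : ∀ v, v ∈ L' := by
      intro v
      have h : [] ∈ lq v L' := by
        rcases hqL'mem v with h | h <;> rw [h] <;> assumption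
      exact nil_mem_lq.mp h
    exact hne (Set.ext fun v => ⟨fun _ => hL'univ v, fun _ => hLuniv v⟩)
  · -- CASE A : ε ∈ L, ε ∉ L'.  Here L' ⊆ L.
    have hL'subL : L' ⊆ L := by
      intro v hv
      have h' : [] ∈ lq v L' := nil_mem_lq.mpr hv
      have hq' : lq v L' = L := by
        rcases hqL'mem v with h | h
        · exact h
        · rw [h] at h'; exact absurd h' hεL'
      have hq : lq v L = L := by
        rcases hqLmem v with h | h
        · exact h
        · exact absurd (noswap v h hq') not_false
      apply nil_mem_lq.mp
      rw [hq]; exact hεL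
    have hXhatmem : lq w₀ K ∈ LeftQuotients K := lq_mem _ _
    have hXhatnil : [] ∈ lq w₀ K := nil_mem_lq.mpr hw₀
    set NF := {X ∈ LeftQuotients K | ([] : List σ) ∉ X} with hNF
    have hNFsub : NF ⊆ LeftQuotients K := fun X hX => hX.1
    have hNFss : NF ⊂ LeftQuotients K :=
      ⟨hNFsub, fun hsub => (hsub hXhatmem).2 hXhatnil⟩
    have hNFfin : NF.Finite := hQKfin.subset hNFsub
    have hNFcard : NF.ncard ≤ m - 1 := by
      have := Set.ncard_lt_ncard hNFss hQKfin
      omega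
    set g1 : Set (List σ) → Set (List σ) := fun X => Set.image2 (· ++ ·) X L with hg1
    set SA := (g1 '' LeftQuotients K) ∪
        (((fun X => g1 X ∪ L) '' NF) ∪ ((fun X => g1 X ∪ L') '' NF)) with hSA
    have hSAfin : SA.Finite :=
      (hQKfin.image _).union ((hNFfin.image _).union (hNFfin.image _))
    have hsub : LeftQuotients C ⊆ SA := by
      rintro S ⟨w, rfl⟩
      show lq w C ∈ SA
      by_cases hP : ∃ p s, w = p ++ s ∧ p ∈ K
      · by_cases hLs : ∃ p s, w = p ++ s ∧ p ∈ K ∧ lq s L = L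
        · -- value is g1 X ∪ L
          have hval : lq w C = g1 (lq w K) ∪ L := by
            ext v
            rw [Set.mem_union]
            constructor
            · intro hv
              rcases (formula w v).mp hv with ⟨c, hc, z, hz, hczv⟩ | ⟨p, s, hw, hp, hvs⟩
              · exact Or.inl (Set.mem_image2.mpr ⟨c, hc, z, hz, hczv⟩)
              · rcases hqLmem s with h | h
                · rw [h] at hvs; exact Or.inr hvs
                · rw [h] at hvs; exact Or.inr (hL'subL hvs)
            · rintro (himg | hvL)
              · obtain ⟨c, hc, z, hz, hczv⟩ := Set.mem_image2.mp himg
                exact (formula w v).mpr (Or.inl ⟨c, hc, z, hz, hczv⟩)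
              · obtain ⟨p, s, hw, hp, hqs⟩ := hLs
                refine (formula w v).mpr (Or.inr ⟨p, s, hw, hp, ?_⟩)
                rw [hqs]; exact hvL
          by_cases hfin : ([] : List σ) ∈ lq w K
          · have hval2 : lq w C = g1 (lq w K) := by
              rw [hval]
              apply Set.union_eq_left.mpr
              intro z hz
              exact Set.mem_image2.mpr ⟨[], hfin, z, hz, by simp⟩
            exact Or.inl ⟨lq w K, lq_mem w K, hval2.symm⟩
          · exact Or.inr (Or.inl ⟨lq w K, ⟨lq_mem w K, hfin⟩, hval.symm⟩)
        · -- all accepted splits give L'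
          have hallL' : ∀ p s, w = p ++ s → p ∈ K → lq s L = L' := by
            intro p s hw hp
            rcases hqLmem s with h | h
            · exact absurd ⟨p, s, hw, hp, h⟩ hLs
            · exact h
          have hval : lq w C = g1 (lq w K) ∪ L' := by
            ext v
            rw [Set.mem_union]
            constructor
            · intro hv
              rcases (formula w v).mp hv with ⟨c, hc, z, hz, hczv⟩ | ⟨p, s, hw, hp, hvs⟩
              · exact Or.inl (Set.mem_image2.mpr ⟨c, hc, z, hz, hczv⟩)
              · rw [hallL' p s hw hp] at hvs; exact Or.inr hvs
            · rintro (himg | hvL')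
              · obtain ⟨c, hc, z, hz, hczv⟩ := Set.mem_image2.mp himg
                exact (formula w v).mpr (Or.inl ⟨c, hc, z, hz, hczv⟩)
              · obtain ⟨p, s, hw, hp⟩ := hP
                refine (formula w v).mpr (Or.inr ⟨p, s, hw, hp, ?_⟩)
                rw [hallL' p s hw hp]; exact hvL'
          have hfin : ([] : List σ) ∉ lq w K := by
            intro h
            exact hLs ⟨w, [], (List.append_nil w).symm, nil_mem_lq.mp h, lq_nil L⟩
          exact Or.inr (Or.inr ⟨lq w K, ⟨lq_mem w K, hfin⟩, hval.symm⟩)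
      · exact Or.inl ⟨lq w K, lq_mem w K, (val_noP w hP).symm⟩
    refine ⟨hSAfin.subset hsub, ?_⟩
    have h1 : SA.ncard ≤ (g1 '' LeftQuotients K).ncard +
        (((fun X => g1 X ∪ L) '' NF) ∪ ((fun X => g1 X ∪ L') '' NF)).ncard :=
      Set.ncard_union_le _ _
    have h2 : (((fun X => g1 X ∪ L) '' NF) ∪ ((fun X => g1 X ∪ L') '' NF)).ncard ≤
        ((fun X => g1 X ∪ L) '' NF).ncard + ((fun X => g1 X ∪ L') '' NF).ncard :=
      Set.ncard_union_le _ _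
    have h3 : (g1 '' LeftQuotients K).ncard ≤ m := by
      rw [← hKm]; exact Set.ncard_image_le hQKfin
    have h4 : ((fun X => g1 X ∪ L) '' NF).ncard ≤ m - 1 :=
      le_trans (Set.ncard_image_le hNFfin) hNFcard
    have h5 : ((fun X => g1 X ∪ L') '' NF).ncard ≤ m - 1 :=
      le_trans (Set.ncard_image_le hNFfin) hNFcard
    have h6 : (LeftQuotients C).ncard ≤ SA.ncard := Set.ncard_le_ncard hsub hSAfin
    omega
  · -- CASE B : ε ∉ L, ε ∈ L'.  Here L ⊆ L' and Σ*·L ⊆ L.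
    have hmemL : ∀ v : List σ, v ∈ L → lq v L = L' := by
      intro v hv
      rcases hqLmem v with h | h
      · exfalso
        apply hεL
        rw [← h]
        exact nil_mem_lq.mpr hv
      · exact h
    have hqvL' : ∀ v : List σ, v ∈ L → lq v L' = L' := by
      intro v hv
      rcases hqL'mem v with h | h
      · exact absurd (noswap v (hmemL v hv) h) not_false
      · exact h
    have hLsubL' : L ⊆ L' := by
      intro v hv
      apply nil_mem_lq.mp
      rw [hqvL' v hv]
      exact hεL'
    have prep : ∀ (u z : List σ), z ∈ L → u ++ z ∈ L := by
      intro u z hz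
      apply nil_mem_lq.mp
      rw [lq_append]
      rcases hqLmem u with h | h
      · rw [h, hmemL z hz]; exact hεL'
      · rw [h, hqvL' z hz]; exact hεL'
    set g1 : Set (List σ) → Set (List σ) := fun X => Set.image2 (· ++ ·) X L with hg1
    set SB := (g1 '' LeftQuotients K) ∪ {L'} with hSB
    have hSBfin : SB.Finite := (hQKfin.image _).union (Set.finite_singleton _)
    have hsub : LeftQuotients C ⊆ SB := by
      rintro S ⟨w, rfl⟩
      show lq w C ∈ SB
      by_cases hP : ∃ p s, w = p ++ s ∧ p ∈ K
      · by_cases hL's : ∃ p s, w = p ++ s ∧ p ∈ K ∧ lq s L = L'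
        · -- value is L'
          have hval : lq w C = L' := by
            ext v
            constructor
            · intro hv
              rcases (formula w v).mp hv with ⟨c, hc, z, hz, hczv⟩ | ⟨p, s, hw, hp, hvs⟩
              · rw [← hczv]; exact hLsubL' (prep c z hz)
              · rcases hqLmem s with h | h
                · rw [h] at hvs; exact hLsubL' hvs
                · rw [h] at hvs; exact hvs
            · intro hv
              obtain ⟨p, s, hw, hp, hqs⟩ := hL's
              refine (formula w v).mpr (Or.inr ⟨p, s, hw, hp, ?_⟩)
              rw [hqs]; exact hv
          rw [hval]
          exact Or.inr rfl
        · -- value is L, and L = g1 (lq p K) for a prefix p ∈ K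
          have hallL : ∀ p s, w = p ++ s → p ∈ K → lq s L = L := by
            intro p s hw hp
            rcases hqLmem s with h | h
            · exact h
            · exact absurd ⟨p, s, hw, hp, h⟩ hL's
          have hval : lq w C = L := by
            ext v
            constructor
            · intro hv
              rcases (formula w v).mp hv with ⟨c, hc, z, hz, hczv⟩ | ⟨p, s, hw, hp, hvs⟩
              · rw [← hczv]; exact prep c z hz
              · rw [hallL p s hw hp] at hvs; exact hvs
            · intro hv
              obtain ⟨p, s, hw, hp⟩ := hP
              refine (formula w v).mpr (Or.inr ⟨p, s, hw, hp, ?_⟩)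
              rw [hallL p s hw hp]; exact hv
          obtain ⟨p, s, hw, hp⟩ := hP
          have hLg : L = g1 (lq p K) := by
            ext z
            constructor
            · intro hz
              exact Set.mem_image2.mpr ⟨[], nil_mem_lq.mpr hp, z, hz, by simp⟩
            · intro hz
              obtain ⟨c, _, z', hz', hcz⟩ := Set.mem_image2.mp hz
              rw [← hcz]; exact prep c z' hz'
          rw [hval, hLg]
          exact Or.inl ⟨lq p K, lq_mem p K, rfl⟩
      · exact Or.inl ⟨lq w K, lq_mem w K, (val_noP w hP).symm⟩
    refine ⟨hSBfin.subset hsub, ?_⟩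
    have h1 : SB.ncard ≤ (g1 '' LeftQuotients K).ncard + ({L'} : Set _).ncard :=
      Set.ncard_union_le _ _
    have h3 : (g1 '' LeftQuotients K).ncard ≤ m := by
      rw [← hKm]; exact Set.ncard_image_le hQKfin
    have h6 : (LeftQuotients C).ncard ≤ SB.ncard := Set.ncard_le_ncard hsub hSBfin
    have h7 : ({L'} : Set (Set (List σ))).ncard = 1 := Set.ncard_singleton _
    omega
  · -- neither contains ε : impossible
    exfalso
    have hLempty : ∀ v, v ∉ L := by
      intro v hv
      have h : [] ∈ lq v L := nil_mem_lq.mpr hv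
      rcases hqLmem v with h' | h' <;> rw [h'] at h <;> [exact hεL h; exact hεL' h]
    have hL'empty : ∀ v, v ∉ L' := by
      intro v hv
      have h : [] ∈ lq v L' := nil_mem_lq.mpr hv
      rcases hqL'mem v with h' | h' <;> rw [h'] at h <;> [exact hεL h; exact hεL' h]
    exact hne (Set.ext fun v =>
      ⟨fun h => absurd h (hLempty v), fun h => absurd h (hL'empty v)⟩)
end

section
/- For every n ≥ 1 and k ≥ 0, the number of k-partial transformations of Q_n = {0,…,n−1} consistent with the monoid of all monotone transformations of Q_n equals C(2n−1, n) + Σ_{h=0}^{n−1} k^{n−h} · C(n, h) · C(n+h−1, h), where C denotes the binomial coefficient. -/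
open Finset

-- helper: strict mono from Fin gains at least the index difference
lemma strictMono_gain {d M : ℕ} {g : Fin d → Fin M} (hg : StrictMono g) :
    ∀ t : ℕ, ∀ i j : Fin d, (j : ℕ) = i + t → (g i : ℕ) + t ≤ g j := by
  intro t
  induction t with
  | zero => intro i j h; have : j = i := Fin.ext (by omega); subst this; simp
  | succ t ih =>
    intro i j h
    have hj' : (i : ℕ) + t < d := by omega
    have h1 : (g i : ℕ) + t ≤ g ⟨i + t, hj'⟩ := ih i ⟨i + t, hj'⟩ rfl
    have h2 : g ⟨i + t, hj'⟩ < g j := hg (by simp [Fin.lt_def]; omega)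
    have := Fin.lt_def.mp h2
    omega

lemma pt_card_strictMono (d M : ℕ) :
    Fintype.card {g : Fin d → Fin M // StrictMono g} = M.choose d := by
  have e : {g : Fin d → Fin M // StrictMono g} ≃ {s : Finset (Fin M) // s.card = d} := by
    refine
      { toFun := fun g => ⟨Finset.univ.image g.1, by
          rw [Finset.card_image_of_injective _ g.2.injective, Finset.card_univ,
            Fintype.card_fin]⟩
        invFun := fun s => ⟨s.1.orderEmbOfFin s.2, (s.1.orderEmbOfFin s.2).strictMono⟩
        left_inv := ?_
        right_inv := ?_ }
    · rintro ⟨g, hg⟩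
      apply Subtype.ext
      exact (Finset.orderEmbOfFin_unique _ (fun x => Finset.mem_image_of_mem _ (mem_univ x)) hg).symm
    · rintro ⟨s, hs⟩
      apply Subtype.ext
      apply Finset.coe_injective
      rw [Finset.coe_image, Finset.coe_univ, Set.image_univ]
      exact Finset.range_orderEmbOfFin s hs
  rw [Fintype.card_congr e, Fintype.card_finset_len, Fintype.card_fin]

def monoStrictEquiv (d m : ℕ) :
    {f : Fin d → Fin (m + 1) // Monotone f} ≃ {g : Fin d → Fin (m + d) // StrictMono g} where
  toFun f := ⟨fun i => ⟨f.1 i + i, by have h1 : (f.1 i : ℕ) < m + 1 := (f.1 i).2; omega⟩, by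
    intro i j hij
    have h1 : f.1 i ≤ f.1 j := f.2 hij.le
    have := Fin.le_def.mp h1
    have := Fin.lt_def.mp hij
    simp only [Fin.lt_def]
    omega⟩
  invFun g := ⟨fun i => ⟨g.1 i - i, by
      have key := strictMono_gain g.2 (d - 1 - i) i ⟨d - 1, by have := i.2; omega⟩ (by have := i.2; simp; omega)
      have : (g.1 ⟨d - 1, by have := i.2; omega⟩ : ℕ) < m + d := (g.1 _).2
      omega⟩, by
    intro i j hij
    have key := strictMono_gain g.2 ((j : ℕ) - i) i j (by have := Fin.le_def.mp hij; omega)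
    simp only [Fin.le_def]
    have := Fin.le_def.mp hij
    omega⟩
  left_inv f := by
    apply Subtype.ext; funext i; apply Fin.ext; simp
  right_inv g := by
    apply Subtype.ext; funext i; apply Fin.ext
    have key := strictMono_gain g.2 (i : ℕ) ⟨0, by have := i.2; omega⟩ i (by simp)
    simp
    omega

lemma card_monotone (d m : ℕ) :
    Fintype.card {f : Fin d → Fin (m + 1) // Monotone f} = (m + d).choose d := by
  rw [Fintype.card_congr (monoStrictEquiv d m), pt_card_strictMono]

/-- A `k`-partial transformation `g` of `Q` (a map `Q → Q ⊕ {□1,…,□k}`) is consistent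
with a set `S` of transformations of `Q` if some `t ∈ S` agrees with `g` wherever `g`
takes a value in `Q`. -/
def ConsistentWith {Q : Type*} (S : Set (Q → Q)) {k : ℕ} (g : Q → Q ⊕ Fin k) : Prop :=
  ∃ t ∈ S, ∀ (q x : Q), g q = Sum.inl x → t q = x

def PMono {n k : ℕ} (g : Fin n → Fin n ⊕ Fin k) : Prop :=
  ∀ p q (x y : Fin n), p ≤ q → g p = Sum.inl x → g q = Sum.inl y → x ≤ y

lemma consistent_iff {m k : ℕ} (g : Fin (m + 1) → Fin (m + 1) ⊕ Fin k) :
    ConsistentWith {t : Fin (m + 1) → Fin (m + 1) | Monotone t} g ↔ PMono g := by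
  constructor
  · rintro ⟨t, ht, hag⟩ p q x y hpq hx hy
    rw [← hag p x hx, ← hag q y hy]
    exact ht hpq
  · intro hP
    classical
    set v : Fin (m + 1) ⊕ Fin k → Fin (m + 1) := Sum.elim id (fun _ => 0) with hv
    set t : Fin (m + 1) → Fin (m + 1) := fun q =>
      ((Finset.univ.filter (fun p => p ≤ q ∧ (g p).isLeft)).sup (fun p => v (g p))) with htdef
    refine ⟨t, ?_, ?_⟩
    · intro p q hpq
      apply Finset.sup_mono
      intro r hr
      simp only [Finset.mem_filter, Finset.mem_univ, true_and] at hr ⊢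
      exact ⟨hr.1.trans hpq, hr.2⟩
    · intro q x hx
      apply le_antisymm
      · apply Finset.sup_le
        intro r hr
        simp only [Finset.mem_filter, Finset.mem_univ, true_and] at hr
        obtain ⟨y, hy⟩ := Sum.isLeft_iff.mp hr.2
        rw [hy]
        simpa [hv] using hP r q y x hr.1 hy hx
      · have hq : q ∈ Finset.univ.filter (fun p => p ≤ q ∧ (g p).isLeft) := by
          simp [hx]
        have := Finset.le_sup (f := fun p => v (g p)) hq
        simpa [hx, hv, htdef] using this

abbrev PTSigma (n k : ℕ) :=
  Σ s : Finset (Fin n),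
    {f : {q : Fin n // q ∈ s} → Fin n // Monotone f} × ({q : Fin n // q ∉ s} → Fin k)

def ptFun {n k : ℕ} (x : PTSigma n k) : {g : Fin n → Fin n ⊕ Fin k // PMono g} := by
  refine ⟨fun q => if hq : q ∈ x.1 then Sum.inl (x.2.1.1 ⟨q, hq⟩) else Sum.inr (x.2.2 ⟨q, hq⟩), ?_⟩
  intro p q a b hpq ha hb
  by_cases hp : p ∈ x.1 <;> by_cases hq : q ∈ x.1 <;> simp [hp, hq] at ha hb
  exact ha ▸ hb ▸ x.2.1.2 (show (⟨p, hp⟩ : {q // q ∈ x.1}) ≤ ⟨q, hq⟩ from hpq)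

lemma ptFun_bijective {n k : ℕ} : Function.Bijective (ptFun (n := n) (k := k)) := by
  constructor
  · rintro ⟨s₁, f₁, h₁⟩ ⟨s₂, f₂, h₂⟩ hval
    have hval := Subtype.ext_iff.mp hval
    have hs : s₁ = s₂ := by
      ext q
      have hq := congrFun hval q
      constructor
      · intro h1
        by_contra h2
        simp [ptFun, h1, h2] at hq
      · intro h2
        by_contra h1
        simp [ptFun, h1, h2] at hq
    subst hs
    have hf : f₁ = f₂ := by
      apply Subtype.ext; funext ⟨q, hq⟩
      have := congrFun hval q
      simpa [ptFun, hq] using this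
    have hh : h₁ = h₂ := by
      funext ⟨q, hq⟩
      have := congrFun hval q
      simpa [ptFun, hq] using this
    rw [hf, hh]
  · rintro ⟨g, hg⟩
    classical
    refine ⟨⟨Finset.univ.filter (fun q => (g q).isLeft),
      ⟨fun q => (g q.1).getLeft (by have := q.2; simp only [Finset.mem_filter, Finset.mem_univ, true_and] at this; exact this), ?_⟩,
      fun q => (g q.1).getRight (by have := q.2; simp only [Finset.mem_filter, Finset.mem_univ, true_and] at this; exact Sum.not_isLeft.mp this)⟩, ?_⟩
    · rintro ⟨p, hp⟩ ⟨q, hq⟩ hpq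
      simp only [Finset.mem_filter, Finset.mem_univ, true_and] at hp hq
      exact hg p q _ _ hpq (Sum.inl_getLeft _ hp).symm (Sum.inl_getLeft _ hq).symm
    · apply Subtype.ext
      funext q
      by_cases h : (g q).isLeft
      · simp [ptFun, h, Sum.inl_getLeft]
      · simp [ptFun, h, Sum.inr_getRight]

def monoCompEquiv {α β γ : Type*} [Preorder α] [Preorder β] [Preorder γ] (e : α ≃o β) :
    {f : β → γ // Monotone f} ≃ {f : α → γ // Monotone f} where
  toFun f := ⟨f.1 ∘ e, f.2.comp e.monotone⟩
  invFun f := ⟨f.1 ∘ e.symm, f.2.comp e.symm.monotone⟩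
  left_inv f := by apply Subtype.ext; funext b; simp
  right_inv f := by apply Subtype.ext; funext a; simp

lemma card_mono_subtype {m k : ℕ} (s : Finset (Fin (m + 1))) :
    Nat.card {f : {q : Fin (m + 1) // q ∈ s} → Fin (m + 1) // Monotone f} =
      (m + s.card).choose s.card := by
  classical
  rw [Nat.card_congr (monoCompEquiv (s.orderIsoOfFin rfl)), Nat.card_eq_fintype_card,
    card_monotone]

/-- For every `n ≥ 1` and `k ≥ 0`, the number of `k`-partial transformations of
`Q_n = {0,…,n−1}` consistent with the monoid of all monotone transformations of `Q_n`
equals `C(2n−1, n) + Σ_{h=0}^{n−1} k^{n−h}·C(n, h)·C(n+h−1, h)`. -/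
theorem statement19 (n : ℕ) (hn : 1 ≤ n) (k : ℕ) :
    Nat.card {g : Fin n → Fin n ⊕ Fin k // ConsistentWith {t : Fin n → Fin n | Monotone t} g} =
      Nat.choose (2 * n - 1) n +
        ∑ h ∈ Finset.range n, k ^ (n - h) * Nat.choose n h * Nat.choose (n + h - 1) h := by
  obtain ⟨m, rfl⟩ : ∃ m, n = m + 1 := ⟨n - 1, by omega⟩
  classical
  rw [Nat.card_congr (Equiv.subtypeEquivRight (fun g => consistent_iff g))]
  rw [← Nat.card_congr (Equiv.ofBijective _ (ptFun_bijective (n := m + 1) (k := k)))]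
  rw [Nat.card_eq_fintype_card, Fintype.card_sigma]
  have hterm : ∀ s : Finset (Fin (m + 1)),
      Fintype.card ({f : {q : Fin (m + 1) // q ∈ s} → Fin (m + 1) // Monotone f} ×
        ({q : Fin (m + 1) // q ∉ s} → Fin k)) =
      (m + s.card).choose s.card * k ^ (m + 1 - s.card) := by
    intro s
    rw [Fintype.card_prod, ← Nat.card_eq_fintype_card, card_mono_subtype]
    congr 1
    rw [Fintype.card_fun, Fintype.card_fin, Fintype.card_subtype_compl,
      Fintype.card_fin, Fintype.card_coe]
    exact 0
  calc ∑ s : Finset (Fin (m + 1)),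
        Fintype.card ({f : {q : Fin (m + 1) // q ∈ s} → Fin (m + 1) // Monotone f} ×
          ({q : Fin (m + 1) // q ∉ s} → Fin k))
      = ∑ s ∈ (Finset.univ : Finset (Fin (m + 1))).powerset,
          (m + s.card).choose s.card * k ^ (m + 1 - s.card) := by
        rw [Finset.powerset_univ]; exact Finset.sum_congr rfl fun s _ => hterm s
    _ = ∑ d ∈ Finset.range ((Finset.univ : Finset (Fin (m + 1))).card + 1),
          (Finset.univ : Finset (Fin (m + 1))).card.choose d •
            ((m + d).choose d * k ^ (m + 1 - d)) :=
        Finset.sum_powerset_apply_card (fun d => (m + d).choose d * k ^ (m + 1 - d))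
    _ = ∑ d ∈ Finset.range (m + 2), (m + 1).choose d * ((m + d).choose d * k ^ (m + 1 - d)) := by
        simp [Finset.card_univ, smul_eq_mul]
    _ = Nat.choose (2 * (m + 1) - 1) (m + 1) +
        ∑ h ∈ Finset.range (m + 1),
          k ^ (m + 1 - h) * Nat.choose (m + 1) h * Nat.choose (m + 1 + h - 1) h := by
        rw [Finset.sum_range_succ]
        rw [add_comm]
        congr 1
        · have h1 : 2 * (m + 1) - 1 = m + (m + 1) := by omega
          simp [h1]
        · refine Finset.sum_congr rfl fun h _ => ?_
          have h2 : m + 1 + h - 1 = m + h := by omega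
          rw [h2]; ring
end
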